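/- Let φ : ℝ → ℂ be differentiable everywhere, with φ ∈ L²(ℝ, ℂ) and deriv φ ∈ L²(ℝ, ℂ). Then φ(x) → 0 as x → +∞ and as x → −∞. -/

import Mathlib

open MeasureTheory Filter

lemma integrable_mul_of_memL2 {f g : ℝ → ℝ} (hf : MemLp f 2 (volume : Measure ℝ))
    (hg : MemLp g 2 (volume : Measure ℝ)) :
    Integrable (fun x => f x * g x) (volume : Measure ℝ) := by
  have h1 : Integrable (fun x => (f x + g x) ^ 2) volume := (hf.add hg).integrable_sq
  have h2 : Integrable (fun x => f x ^ 2) volume := hf.integrable_sq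
  have h3 : Integrable (fun x => g x ^ 2) volume := hg.integrable_sq
  have : (fun x => f x * g x)
      = fun x => ((f x + g x) ^ 2 - f x ^ 2 - g x ^ 2) / 2 := by
    funext x; ring
  rw [this]
  exact ((h1.sub h2).sub h3).div_const 2

/-- If `φ : ℝ → ℂ` is everywhere differentiable with
`φ ∈ L²(ℝ, ℂ)` and `φ' ∈ L²(ℝ, ℂ)`, then `φ(x) → 0` as `x → ±∞`. -/
theorem tendsto_zero_of_L2_deriv_L2 (φ : ℝ → ℂ) (hdiff : Differentiable ℝ φ)
    (hφ : MemLp φ 2 (volume : Measure ℝ))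
    (hφ' : MemLp (deriv φ) 2 (volume : Measure ℝ)) :
    Tendsto φ atTop (nhds 0) ∧ Tendsto φ atBot (nhds 0) := by
  set u : ℝ → ℝ := fun x => (φ x).re with hu_def
  set v : ℝ → ℝ := fun x => (φ x).im with hv_def
  set u' : ℝ → ℝ := fun x => (deriv φ x).re with hu'_def
  set v' : ℝ → ℝ := fun x => (deriv φ x).im with hv'_def
  have hu : MemLp u 2 volume := hφ.re
  have hv : MemLp v 2 volume := hφ.im
  have hu' : MemLp u' 2 volume := hφ'.re
  have hv' : MemLp v' 2 volume := hφ'.im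
  set g : ℝ → ℝ := fun x => u x ^ 2 + v x ^ 2 with hg_def
  set g' : ℝ → ℝ := fun x => 2 * u x * u' x + 2 * v x * v' x with hg'_def
  -- derivative of g
  have hderiv : ∀ x, HasDerivAt g (g' x) x := by
    intro x
    have hd : HasDerivAt φ (deriv φ x) x := (hdiff x).hasDerivAt
    have hure : HasDerivAt u (u' x) x := by
      simpa [Function.comp_def, hu_def, hu'_def] using (Complex.reCLM.hasFDerivAt.comp_hasDerivAt x hd)
    have hvim : HasDerivAt v (v' x) x := by
      simpa [Function.comp_def, hv_def, hv'_def] using (Complex.imCLM.hasFDerivAt.comp_hasDerivAt x hd)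
    have h1 : HasDerivAt (fun x => u x ^ 2) (2 * u x * u' x) x := by
      simpa [mul_comm, mul_assoc, mul_left_comm] using hure.fun_pow 2
    have h2 : HasDerivAt (fun x => v x ^ 2) (2 * v x * v' x) x := by
      simpa [mul_comm, mul_assoc, mul_left_comm] using hvim.fun_pow 2
    exact h1.add h2
  -- integrability of g and g'
  have hgint : Integrable g volume := by
    have h := hφ.norm.integrable_sq
    refine h.congr ?_
    refine Filter.Eventually.of_forall fun x => ?_
    have : ‖φ x‖ ^ 2 = (φ x).re ^ 2 + (φ x).im ^ 2 := by
      rw [Complex.sq_norm, Complex.normSq_apply]; ring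
    simpa [hg_def, hu_def, hv_def] using this
  have hg'int : Integrable g' volume := by
    have h1 : Integrable (fun x => u x * u' x) volume := integrable_mul_of_memL2 hu hu'
    have h2 : Integrable (fun x => v x * v' x) volume := integrable_mul_of_memL2 hv hv'
    have := (h1.const_mul 2).add (h2.const_mul 2)
    refine this.congr (Filter.Eventually.of_forall fun x => ?_)
    simp [hg'_def]; ring
  -- limits of g at ±∞
  have htop : Tendsto g atTop (nhds (limUnder atTop g)) :=
    tendsto_limUnder_of_hasDerivAt_of_integrableOn_Ioi (a := 0)
      (fun x _ => hderiv x) (hg'int.integrableOn)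
  have hbot : Tendsto g atBot (nhds (limUnder atBot g)) :=
    tendsto_limUnder_of_hasDerivAt_of_integrableOn_Iic (a := 0)
      (fun x _ => hderiv x) (hg'int.integrableOn)
  have htop0 : limUnder atTop g = 0 := by
    refine IntegrableAtFilter.eq_zero_of_tendsto
      ⟨Set.Ioi 0, Ioi_mem_atTop 0, hgint.integrableOn⟩ ?_ htop
    intro s hs
    rcases mem_atTop_sets.1 hs with ⟨b, hb⟩
    rw [← top_le_iff, ← Real.volume_Ici (a := b)]
    exact measure_mono hb
  have hbot0 : limUnder atBot g = 0 := by
    refine IntegrableAtFilter.eq_zero_of_tendsto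
      ⟨Set.Iic 0, Iic_mem_atBot 0, hgint.integrableOn⟩ ?_ hbot
    intro s hs
    rcases mem_atBot_sets.1 hs with ⟨b, hb⟩
    rw [← top_le_iff, ← Real.volume_Iic (a := b)]
    exact measure_mono hb
  rw [htop0] at htop
  rw [hbot0] at hbot
  -- conclude
  have key : ∀ l : Filter ℝ, Tendsto g l (nhds 0) → Tendsto φ l (nhds 0) := by
    intro l hl
    rw [tendsto_zero_iff_norm_tendsto_zero]
    have hsqrt : Tendsto (fun x => Real.sqrt (g x)) l (nhds 0) := by
      have := (Real.continuous_sqrt.tendsto 0).comp hl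
      simpa [Function.comp_def] using this
    refine hsqrt.congr fun x => ?_
    have : g x = ‖φ x‖ ^ 2 := by
      rw [Complex.sq_norm, Complex.normSq_apply]
      simp [hg_def, hu_def, hv_def]; ring
    rw [this, Real.sqrt_sq (norm_nonneg _)]
  exact ⟨key _ htop, key _ hbot⟩
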